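/- Let (X,d) be a compact metric space, f_{1,∞} an NDS on X, μ a Borel probability measure on X, Z ⊆ X, and s ∈ ℝ. If h̲_μ(f_{1,∞},x) ≤ s for every x ∈ Z, then h^B_{top}(f_{1,∞},Z) ≤ s and h^{WB}_{top}(f_{1,∞},Z) ≤ s. -/

import Mathlib

open Filter MeasureTheory Set ENNReal

noncomputable section

variable {X : Type} [MetricSpace X]

/-- The iterate `f_1^n = f_n ∘ ⋯ ∘ f_1` of the NDS `f`, where `f 0` is the first map `f_1`. -/
def nIter (f : ℕ → X → X) : ℕ → X → X
  | 0 => id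
  | n + 1 => f n ∘ nIter f n

/-- The Bowen (dynamical) ball `B_n(x, ε)` for the Bowen metric
`d_n(x,y) = max_{0 ≤ j < n} d(f_1^j x, f_1^j y)`. -/
def bowenBall (f : ℕ → X → X) (n : ℕ) (x : X) (ε : ℝ) : Set X :=
  {y | ∀ j < n, dist (nIter f j x) (nIter f j y) < ε}

/-- The Birkhoff sum `S_{1,n} ψ (x) = ∑_{j=0}^{n-1} ψ(f_1^j x)`. -/
def birkSum (f : ℕ → X → X) (ψ : X → ℝ) (n : ℕ) (x : X) : ℝ :=
  ∑ j ∈ Finset.range n, ψ (nIter f j x)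

/-- `S_{1,n} ψ (x, ε) = sup_{y ∈ B_n(x,ε)} S_{1,n} ψ (y)`. -/
def birkSupBall (f : ℕ → X → X) (ψ : X → ℝ) (n : ℕ) (x : X) (ε : ℝ) : ℝ :=
  sSup (birkSum f ψ n '' bowenBall f n x ε)

/-- `M(n, α, ε, Z, ψ)`: infimum of `∑_i exp(-α n_i + S_{1,n_i}ψ(x_i, ε))` over all finite or
countable covers `Z ⊆ ⋃_i B_{n_i}(x_i, ε)` with `n_i ≥ n`. -/
def Mpre (f : ℕ → X → X) (ψ : X → ℝ) (Z : Set X) (n : ℕ) (α ε : ℝ) : ℝ≥0∞ :=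
  sInf { S : ℝ≥0∞ | ∃ (u : Set ℕ) (c : ℕ → X) (m : ℕ → ℕ),
    (∀ i ∈ u, n ≤ m i) ∧ (Z ⊆ ⋃ i ∈ u, bowenBall f (m i) (c i) ε) ∧
    S = ∑' i : u, ENNReal.ofReal (Real.exp (-α * (m i : ℝ) + birkSupBall f ψ (m i) (c i) ε)) }

/-- `𝓜(n, α, ε, Z, ψ)`: as `Mpre` but with the Birkhoff sums evaluated at the centers. -/
def MpreC (f : ℕ → X → X) (ψ : X → ℝ) (Z : Set X) (n : ℕ) (α ε : ℝ) : ℝ≥0∞ :=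
  sInf { S : ℝ≥0∞ | ∃ (u : Set ℕ) (c : ℕ → X) (m : ℕ → ℕ),
    (∀ i ∈ u, n ≤ m i) ∧ (Z ⊆ ⋃ i ∈ u, bowenBall f (m i) (c i) ε) ∧
    S = ∑' i : u, ENNReal.ofReal (Real.exp (-α * (m i : ℝ) + birkSum f ψ (m i) (c i))) }

/-- `M(α, ε, Z, ψ) = lim_{n→∞} M(n, α, ε, Z, ψ)`; the quantity is nondecreasing in `n`,
so the limit is the supremum. -/
def Mlim (f : ℕ → X → X) (ψ : X → ℝ) (Z : Set X) (α ε : ℝ) : ℝ≥0∞ :=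
  ⨆ n : ℕ, Mpre f ψ Z n α ε

/-- `𝓜(α, ε, Z, ψ) = lim_{n→∞} 𝓜(n, α, ε, Z, ψ)`. -/
def MlimC (f : ℕ → X → X) (ψ : X → ℝ) (Z : Set X) (α ε : ℝ) : ℝ≥0∞ :=
  ⨆ n : ℕ, MpreC f ψ Z n α ε

/-- `P^B(ε, Z, ψ) = inf {α : M(α, ε, Z, ψ) = 0}`, as an extended real. -/
def PBeps (f : ℕ → X → X) (ψ : X → ℝ) (Z : Set X) (ε : ℝ) : EReal :=
  sInf (Real.toEReal '' {α : ℝ | Mlim f ψ Z α ε = 0})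

/-- `𝒫^B(ε, Z, ψ) = inf {α : 𝓜(α, ε, Z, ψ) = 0}`. -/
def PBCeps (f : ℕ → X → X) (ψ : X → ℝ) (Z : Set X) (ε : ℝ) : EReal :=
  sInf (Real.toEReal '' {α : ℝ | MlimC f ψ Z α ε = 0})

/-- The Pesin–Pitskel topological pressure `P^B_{f_{1,∞}}(Z, ψ) = lim_{ε→0} P^B(ε, Z, ψ)`. -/
def PB (f : ℕ → X → X) (ψ : X → ℝ) (Z : Set X) : EReal :=
  limUnder (nhdsWithin 0 (Ioi 0)) fun ε : ℝ => PBeps f ψ Z ε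

/-- `W(n, α, ε, Z, ψ)`: the weighted analogue of `Mpre`. -/
def Wpre (f : ℕ → X → X) (ψ : X → ℝ) (Z : Set X) (n : ℕ) (α ε : ℝ) : ℝ≥0∞ :=
  sInf { S : ℝ≥0∞ | ∃ (u : Set ℕ) (cx : ℕ → X) (m : ℕ → ℕ) (c : ℕ → ℝ),
    (∀ i ∈ u, 0 < c i) ∧ (∀ i ∈ u, n ≤ m i) ∧
    (∀ z ∈ Z, 1 ≤ ∑' i : u,
      (bowenBall f (m i) (cx i) ε).indicator (fun _ => ENNReal.ofReal (c i)) z) ∧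
    S = ∑' i : u, ENNReal.ofReal (c i) *
      ENNReal.ofReal (Real.exp (-α * (m i : ℝ) + birkSupBall f ψ (m i) (cx i) ε)) }

/-- `W(α, ε, Z, ψ) = lim_{n→∞} W(n, α, ε, Z, ψ)`. -/
def Wlim (f : ℕ → X → X) (ψ : X → ℝ) (Z : Set X) (α ε : ℝ) : ℝ≥0∞ :=
  ⨆ n : ℕ, Wpre f ψ Z n α ε

/-- `P^W(ε, Z, ψ)`: the critical value of `α` at which `W(α, ε, Z, ψ)` jumps from `∞` to `0`. -/
def PWeps (f : ℕ → X → X) (ψ : X → ℝ) (Z : Set X) (ε : ℝ) : EReal :=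
  sInf (Real.toEReal '' {α : ℝ | Wlim f ψ Z α ε = 0})

/-- The weighted topological pressure `P^W_{f_{1,∞}}(Z, ψ) = lim_{ε→0} P^W(ε, Z, ψ)`. -/
def PW (f : ℕ → X → X) (ψ : X → ℝ) (Z : Set X) : EReal :=
  limUnder (nhdsWithin 0 (Ioi 0)) fun ε : ℝ => PWeps f ψ Z ε

/-- Bowen topological entropy `h^B_top(f_{1,∞}, Z)`, i.e. pressure of the zero potential. -/
def hBtop (f : ℕ → X → X) (Z : Set X) : EReal := PB f (fun _ => 0) Z

/-- Weighted Bowen topological entropy `h^{WB}_top(f_{1,∞}, Z)`. -/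
def hWBtop (f : ℕ → X → X) (Z : Set X) : EReal := PW f (fun _ => 0) Z

/-- `EReal → ℝ≥0∞`, sending `⊤` to `⊤` and everything negative to `0`. -/
def ERealToENNReal (x : EReal) : ℝ≥0∞ := if x = ⊤ then ⊤ else ENNReal.ofReal x.toReal

variable [MeasurableSpace X]

/-- The measure-theoretic local pressure
`P_μ(x,ψ) = lim_{ε→0} liminf_{n→∞} (-log μ(B_n(x,ε)) + S_{1,n}ψ(x))/n`. -/
def Ploc (f : ℕ → X → X) (μ : Measure X) (ψ : X → ℝ) (x : X) : EReal :=
  limUnder (nhdsWithin 0 (Ioi 0)) fun ε : ℝ =>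
    Filter.atTop.liminf fun n : ℕ =>
      (((n : ℝ)⁻¹ : ℝ) : EReal) *
        (-(ENNReal.log (μ (bowenBall f n x ε))) + ((birkSum f ψ n x : ℝ) : EReal))

/-- The integral of an extended-real-valued function: the difference of the lower integrals of
its positive and negative parts. -/
def ERealIntegral (μ : Measure X) (g : X → EReal) : EReal :=
  ((∫⁻ x, ERealToENNReal (g x) ∂μ : ℝ≥0∞) : EReal)
    - ((∫⁻ x, ERealToENNReal (-(g x)) ∂μ : ℝ≥0∞) : EReal)

/-- The measure-theoretic pressure `P_μ(X, ψ) = ∫ P_μ(x, ψ) dμ(x)`. -/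
def Pmeas (f : ℕ → X → X) (μ : Measure X) (ψ : X → ℝ) : EReal :=
  ERealIntegral μ (Ploc f μ ψ)

/-- The measure-theoretic local lower entropy `h̲_μ(f_{1,∞}, x)`. -/
def hloc (f : ℕ → X → X) (μ : Measure X) (x : X) : EReal := Ploc f μ (fun _ => 0) x

/-- The measure-theoretic lower entropy `h̲_μ(f_{1,∞}) = ∫ h̲_μ(f_{1,∞}, x) dμ(x)`. -/
def hmeas (f : ℕ → X → X) (μ : Measure X) : EReal := Pmeas f μ (fun _ => 0)


/-! ### Auxiliary lemmas -/

section Aux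

lemma nIter_continuous (f : ℕ → X → X) (hf : ∀ n, Continuous (f n)) (n : ℕ) :
    Continuous (nIter f n) := by
  induction n with
  | zero => exact continuous_id
  | succ n ih => exact (hf n).comp ih

lemma bowenBall_eq (f : ℕ → X → X) (n : ℕ) (x : X) (ε : ℝ) :
    bowenBall f n x ε =
      ⋂ j ∈ Finset.range n, (nIter f j) ⁻¹' (Metric.ball (nIter f j x) ε) := by
  ext y
  simp [bowenBall, Metric.mem_ball, dist_comm]

lemma bowenBall_isOpen (f : ℕ → X → X) (hf : ∀ n, Continuous (f n)) (n : ℕ) (x : X) (ε : ℝ) :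
    IsOpen (bowenBall f n x ε) := by
  rw [bowenBall_eq]
  exact isOpen_biInter_finset fun j _ =>
    Metric.isOpen_ball.preimage (nIter_continuous f hf j)

lemma bowenBall_mono (f : ℕ → X → X) (n : ℕ) (x : X) {ε ε' : ℝ} (h : ε ≤ ε') :
    bowenBall f n x ε ⊆ bowenBall f n x ε' :=
  fun y hy j hj => lt_of_lt_of_le (hy j hj) h

lemma self_mem_bowenBall (f : ℕ → X → X) (n : ℕ) (x : X) {ε : ℝ} (hε : 0 < ε) :
    x ∈ bowenBall f n x ε :=
  fun j _ => by simpa using hε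

lemma birkSum_zero (f : ℕ → X → X) (n : ℕ) (x : X) :
    birkSum f (fun _ => 0) n x = 0 := by
  simp [birkSum]

lemma birkSupBall_zero (f : ℕ → X → X) (n : ℕ) (x : X) (ε : ℝ) :
    birkSupBall f (fun _ => 0) n x ε = 0 := by
  unfold birkSupBall
  rcases (bowenBall f n x ε).eq_empty_or_nonempty with h | h
  · simp [h, Real.sSup_empty]
  · have himg : birkSum f (fun _ => 0) n '' bowenBall f n x ε = {0} := by
      apply Subset.antisymm
      · rintro _ ⟨y, -, rfl⟩
        simp [birkSum_zero]
      · rintro z hz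
        rw [Set.mem_singleton_iff] at hz
        exact ⟨h.some, h.some_mem, by rw [birkSum_zero, hz]⟩
    rw [himg, csSup_singleton]

/-- The inner liminf in the definition of `hloc`, at a fixed radius `ε`. -/
def locSeq (f : ℕ → X → X) (μ : Measure X) (x : X) (ε : ℝ) : EReal :=
  Filter.atTop.liminf fun n : ℕ =>
    (((n : ℝ)⁻¹ : ℝ) : EReal) *
      (-(ENNReal.log (μ (bowenBall f n x ε))) + ((birkSum f (fun _ => 0) n x : ℝ) : EReal))

lemma locSeq_antitone (f : ℕ → X → X) (μ : Measure X) (x : X) :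
    Antitone (locSeq f μ x) := by
  intro ε₁ ε₂ h
  refine Filter.liminf_le_liminf (Filter.Eventually.of_forall fun n => ?_)
  refine mul_le_mul_of_nonneg_left ?_ (by exact_mod_cast inv_nonneg.mpr (Nat.cast_nonneg n))
  refine add_le_add_left ?_ _
  rw [EReal.neg_le_neg_iff]
  exact ENNReal.log_monotone (measure_mono (bowenBall_mono f n x h))

lemma locSeq_le_hloc (f : ℕ → X → X) (μ : Measure X) (x : X) {ε : ℝ} (hε : 0 < ε) :
    locSeq f μ x ε ≤ hloc f μ x := by
  have ht := (locSeq_antitone f μ x).tendsto_nhdsGT 0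
  have heq : hloc f μ x = sSup (locSeq f μ x '' Ioi 0) := ht.limUnder_eq
  rw [heq]
  exact le_sSup ⟨ε, hε, rfl⟩

lemma exists_large_ball (f : ℕ → X → X) (μ : Measure X) [IsProbabilityMeasure μ]
    {x : X} {ε s α : ℝ} (hg : locSeq f μ x ε ≤ (s : EReal)) (hsα : s < α) (N : ℕ) :
    ∃ n, N ≤ n ∧ ENNReal.ofReal (Real.exp (-α * n)) ≤ μ (bowenBall f n x ε) := by
  have hlt : locSeq f μ x ε < (α : EReal) :=
    lt_of_le_of_lt hg (by exact_mod_cast hsα)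
  have hfreq := Filter.frequently_lt_of_liminf_lt (f := Filter.atTop) (by isBoundedDefault) hlt
  have hev : ∀ᶠ n : ℕ in Filter.atTop, max N 1 ≤ n := Filter.eventually_ge_atTop _
  obtain ⟨n, hn1, hn2⟩ := (hfreq.and_eventually hev).exists
  have hN : N ≤ n := le_trans (le_max_left _ _) hn2
  have hone : 1 ≤ n := le_trans (le_max_right _ _) hn2
  have hnpos : (0 : ℝ) < ((n : ℝ)⁻¹) := by
    have : (0 : ℝ) < n := by exact_mod_cast hone
    positivity
  set t := μ (bowenBall f n x ε) with ht_def
  rw [birkSum_zero] at hn1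
  have hn1' : (((n : ℝ)⁻¹ : ℝ) : EReal) * (-(ENNReal.log t)) < (α : EReal) := by
    simp only [EReal.coe_zero, add_zero] at hn1
    exact hn1
  have htne : t ≠ 0 := by
    intro h0
    rw [h0, ENNReal.log_zero] at hn1'
    rw [show (-(⊥ : EReal)) = ⊤ by simp, EReal.coe_mul_top_of_pos hnpos] at hn1'
    exact not_top_lt hn1'
  have ht1 : t ≤ 1 := prob_le_one
  have hlog_bot : ENNReal.log t ≠ ⊥ := by simpa using htne
  have hlog_top : ENNReal.log t ≠ ⊤ := fun htop =>
    absurd (ENNReal.log_eq_top_iff.mp htop) (ne_top_of_le_ne_top ENNReal.one_ne_top ht1)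
  set b := (ENNReal.log t).toReal with hb_def
  have hb : ENNReal.log t = (b : EReal) := (EReal.coe_toReal hlog_top hlog_bot).symm
  rw [hb, ← EReal.coe_neg, ← EReal.coe_mul] at hn1'
  have hreal : (n : ℝ)⁻¹ * (-b) < α := EReal.coe_lt_coe_iff.mp hn1'
  have hnr : (0 : ℝ) < n := by exact_mod_cast hone
  have hkey : -α * (n : ℝ) ≤ b := by
    have h2 : -b < (n : ℝ) * α := by rwa [inv_mul_lt_iff₀ hnr] at hreal
    nlinarith
  refine ⟨n, hN, ?_⟩
  rw [← ENNReal.log_le_log_iff, ENNReal.log_ofReal_of_pos (Real.exp_pos _), Real.log_exp, hb]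
  exact_mod_cast hkey

lemma nonempty_of_prob (μ : Measure X) [IsProbabilityMeasure μ] : Nonempty X := by
  by_contra h
  rw [not_nonempty_iff] at h
  have h1 : μ Set.univ = 1 := measure_univ
  rw [show (Set.univ : Set X) = ∅ from Set.univ_eq_empty_iff.mpr h, measure_empty] at h1
  exact zero_ne_one h1

lemma exists_finset_cover [BorelSpace X] (f : ℕ → X → X) (hf : ∀ n, Continuous (f n))
    (μ : Measure X) [IsProbabilityMeasure μ] {ε : ℝ} (hε : 0 < ε) (n : ℕ) {c : ℝ≥0∞}
    (hc : 0 < c) :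
    ∃ F : Finset X, ((F.card : ℝ≥0∞) * c ≤ 1) ∧
      {x : X | c ≤ μ (bowenBall f n x (ε / 2))} ⊆ ⋃ y ∈ F, bowenBall f n y ε := by
  classical
  set A := {x : X | c ≤ μ (bowenBall f n x (ε / 2))} with hA_def
  set S : Set (Set X) := {E | E ⊆ A ∧
    E.Pairwise fun y y' => Disjoint (bowenBall f n y (ε / 2)) (bowenBall f n y' (ε / 2))}
    with hS_def
  have hchain : ∀ C ⊆ S, IsChain (· ⊆ ·) C → ∃ ub ∈ S, ∀ s ∈ C, s ⊆ ub := by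
    intro C hCS hchain
    refine ⟨⋃₀ C, ⟨?_, ?_⟩, fun s hs => subset_sUnion_of_mem hs⟩
    · exact sUnion_subset fun E hE => (hCS hE).1
    · rintro y ⟨E₁, hE₁, hyE₁⟩ y' ⟨E₂, hE₂, hyE₂⟩ hne
      rcases hchain.total hE₁ hE₂ with hsub | hsub
      · exact (hCS hE₂).2 (hsub hyE₁) hyE₂ hne
      · exact (hCS hE₁).2 hyE₁ (hsub hyE₂) hne
  obtain ⟨E, hE⟩ := zorn_subset S hchain
  obtain ⟨hEA, hEdisj⟩ := hE.1
  have hmble : ∀ y : X, MeasurableSet (bowenBall f n y (ε / 2)) := fun y =>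
    (bowenBall_isOpen f hf n y (ε / 2)).measurableSet
  have hfin : E.Finite := by
    have hfin' := MeasureTheory.Measure.finite_const_le_meas_of_disjoint_iUnion μ hc
      (As := fun y : E => bowenBall f n (y : X) (ε / 2)) (fun i => hmble _)
      (fun i j hij => hEdisj i.2 j.2 (Subtype.coe_injective.ne hij))
      (ne_top_of_le_ne_top ENNReal.one_ne_top (prob_le_one))
    have huniv : {i : E | c ≤ μ (bowenBall f n (i : X) (ε / 2))} = Set.univ :=
      eq_univ_of_forall fun i => hEA i.2
    rw [huniv] at hfin'
    have : Finite E := Set.finite_univ_iff.mp hfin'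
    exact Set.toFinite E
  set F := hfin.toFinset with hF_def
  have hmemF : ∀ {y : X}, y ∈ F ↔ y ∈ E := fun {y} => hfin.mem_toFinset
  have hFA : ∀ y ∈ F, c ≤ μ (bowenBall f n y (ε / 2)) := fun y hy => hEA (hmemF.mp hy)
  have hdisjF : (F : Set X).PairwiseDisjoint fun y => bowenBall f n y (ε / 2) := by
    intro y hy y' hy' hne
    exact hEdisj (hmemF.mp (by simpa using hy)) (hmemF.mp (by simpa using hy')) hne
  have hsum : (F.card : ℝ≥0∞) * c ≤ 1 := by
    calc (F.card : ℝ≥0∞) * c = ∑ _y ∈ F, c := by rw [Finset.sum_const, nsmul_eq_mul]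
      _ ≤ ∑ y ∈ F, μ (bowenBall f n y (ε / 2)) := Finset.sum_le_sum hFA
      _ = μ (⋃ y ∈ F, bowenBall f n y (ε / 2)) :=
          (measure_biUnion_finset hdisjF fun y _ => hmble y).symm
      _ ≤ 1 := prob_le_one
  refine ⟨F, hsum, fun x hx => ?_⟩
  have hxA : x ∈ A := hx
  by_cases hinter : ∃ y ∈ E, ¬ Disjoint (bowenBall f n x (ε / 2)) (bowenBall f n y (ε / 2))
  · obtain ⟨y, hyE, hnd⟩ := hinter
    obtain ⟨z, hz1, hz2⟩ := Set.not_disjoint_iff.mp hnd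
    refine Set.mem_biUnion (hmemF.mpr hyE) ?_
    intro j hj
    calc dist (nIter f j y) (nIter f j x)
        ≤ dist (nIter f j y) (nIter f j z) + dist (nIter f j z) (nIter f j x) :=
          dist_triangle _ _ _
      _ < ε / 2 + ε / 2 := by
          refine add_lt_add (hz2 j hj) ?_
          rw [dist_comm]
          exact hz1 j hj
      _ = ε := by ring
  · push_neg at hinter
    have hS' : insert x E ∈ S := by
      refine ⟨insert_subset hxA hEA, hEdisj.insert fun y hyE hne => ?_⟩
      exact ⟨hinter y hyE, (hinter y hyE).symm⟩
    have hsub : insert x E ⊆ E := hE.2 hS' (subset_insert x E)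
    have hxE : x ∈ E := hsub (mem_insert x E)
    have hxball : x ∈ bowenBall f n x (ε / 2) := self_mem_bowenBall f n x (by linarith)
    exact absurd (Set.disjoint_left.mp (hinter x hxE) hxball) (by simp [hxball])

lemma Mpre_mono_n (f : ℕ → X → X) (ψ : X → ℝ) (Z : Set X) (α ε : ℝ) :
    Monotone fun n => Mpre f ψ Z n α ε := by
  intro n n' h
  apply sInf_le_sInf
  rintro S ⟨u, c, m, h1, h2, h3⟩
  exact ⟨u, c, m, fun i hi => le_trans h (h1 i hi), h2, h3⟩

lemma Mpre_le_bound [BorelSpace X] (f : ℕ → X → X) (hf : ∀ n, Continuous (f n))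
    (μ : Measure X) [IsProbabilityMeasure μ] (Z : Set X) {ε α α' : ℝ}
    (hε : 0 < ε) (hαα' : α < α')
    (hcov : ∀ x ∈ Z, ∀ N : ℕ, ∃ n, N ≤ n ∧
      ENNReal.ofReal (Real.exp (-α * n)) ≤ μ (bowenBall f n x (ε / 2)))
    (N : ℕ) :
    Mpre f (fun _ => 0) Z N α' ε ≤
      (1 - ENNReal.ofReal (Real.exp (α - α')))⁻¹ * ENNReal.ofReal (Real.exp (α - α')) ^ N := by
  classical
  have hX : Nonempty X := nonempty_of_prob μ
  obtain ⟨x₀⟩ := hX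
  set r := ENNReal.ofReal (Real.exp (α - α')) with hr_def
  choose F hFcard hFcov using fun n : ℕ =>
    exists_finset_cover f hf μ hε n (ENNReal.ofReal_pos.mpr (Real.exp_pos (-α * n)))
  set σ : ℕ → ℕ → X := fun n i => ((F n).toList.getD i x₀) with hσ_def
  set e : ℕ ≃ ℕ × ℕ := Nat.pairEquiv.symm with he_def
  set u : Set ℕ := {j | N ≤ (e j).1 ∧ (e j).2 < (F (e j).1).card} with hu_def
  set cc : ℕ → X := fun j => σ (e j).1 (e j).2 with hcc_def
  set m : ℕ → ℕ := fun j => (e j).1 with hm_def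
  have hcover : Z ⊆ ⋃ i ∈ u, bowenBall f (m i) (cc i) ε := by
    intro z hz
    obtain ⟨n, hnN, hball⟩ := hcov z hz N
    have hz2 := hFcov n hball
    rw [Set.mem_iUnion₂] at hz2
    obtain ⟨y, hyF, hzy⟩ := hz2
    obtain ⟨i, hi, hgi⟩ := List.mem_iff_getElem.mp (Finset.mem_toList.mpr hyF)
    have hlen : (F n).toList.length = (F n).card := Finset.length_toList _
    have hiu : e.symm (n, i) ∈ u := by
      simp only [hu_def, Set.mem_setOf_eq, Equiv.apply_symm_apply]
      exact ⟨hnN, hlen ▸ hi⟩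
    refine Set.mem_biUnion hiu ?_
    have h1 : m (e.symm (n, i)) = n := by simp [hm_def, Equiv.apply_symm_apply]
    have h2 : cc (e.symm (n, i)) = y := by
      simp only [hcc_def, hσ_def, Equiv.apply_symm_apply]
      rw [List.getD_eq_getElem _ _ hi]
      exact hgi
    rw [h1, h2]
    exact hzy
  refine le_trans (sInf_le ⟨u, cc, m, fun i hi => hi.1, hcover, rfl⟩) ?_
  have hvle : ∀ p : ℕ × ℕ,
      u.indicator (fun j => ENNReal.ofReal (Real.exp (-α' * (m j)))) (e.symm p) =
        (if N ≤ p.1 ∧ p.2 < (F p.1).card then ENNReal.ofReal (Real.exp (-α' * p.1)) else 0) := by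
    intro p
    rw [Set.indicator_apply]
    have hiff : e.symm p ∈ u ↔ (N ≤ p.1 ∧ p.2 < (F p.1).card) := by
      simp [hu_def, Equiv.apply_symm_apply]
    by_cases hp : N ≤ p.1 ∧ p.2 < (F p.1).card
    · rw [if_pos (hiff.mpr hp), if_pos hp]
      simp [hm_def, Equiv.apply_symm_apply]
    · rw [if_neg (fun hmem => hp (hiff.mp hmem)), if_neg hp]
  calc
    ∑' i : u, ENNReal.ofReal
        (Real.exp (-α' * (m i : ℕ) + birkSupBall f (fun _ => 0) (m i) (cc i) ε))
      = ∑' i : u, ENNReal.ofReal (Real.exp (-α' * (m i : ℕ))) := by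
        refine tsum_congr fun i => ?_
        rw [birkSupBall_zero, add_zero]
    _ = ∑' j : ℕ, u.indicator (fun j => ENNReal.ofReal (Real.exp (-α' * (m j)))) j :=
        tsum_subtype u (fun j => ENNReal.ofReal (Real.exp (-α' * (m j))))
    _ = ∑' p : ℕ × ℕ, u.indicator (fun j => ENNReal.ofReal (Real.exp (-α' * (m j)))) (e.symm p) :=
        (Equiv.tsum_eq e.symm _).symm
    _ = ∑' p : ℕ × ℕ,
        (if N ≤ p.1 ∧ p.2 < (F p.1).card then ENNReal.ofReal (Real.exp (-α' * p.1)) else 0) :=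
        tsum_congr hvle
    _ = ∑' n : ℕ, ∑' i : ℕ,
        (if N ≤ n ∧ i < (F n).card then ENNReal.ofReal (Real.exp (-α' * n)) else 0) :=
        ENNReal.tsum_prod'
    _ ≤ ∑' n : ℕ, (if N ≤ n then r ^ n else 0) := by
        refine ENNReal.tsum_le_tsum fun n => ?_
        by_cases hN : N ≤ n
        · simp only [hN, true_and, if_true]
          have hsum_eq : ∑' i : ℕ,
              (if i < (F n).card then ENNReal.ofReal (Real.exp (-α' * n)) else 0) =
              ∑ i ∈ Finset.range (F n).card,
                (if i < (F n).card then ENNReal.ofReal (Real.exp (-α' * n)) else 0) :=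
            tsum_eq_sum (fun i hi => if_neg (by simpa using hi))
          rw [hsum_eq]
          have hsum_eq2 : ∑ i ∈ Finset.range (F n).card,
              (if i < (F n).card then ENNReal.ofReal (Real.exp (-α' * n)) else 0) =
              ((F n).card : ℝ≥0∞) * ENNReal.ofReal (Real.exp (-α' * n)) := by
            rw [Finset.sum_congr rfl fun i hi => if_pos (Finset.mem_range.mp hi)]
            rw [Finset.sum_const, Finset.card_range, nsmul_eq_mul]
          rw [hsum_eq2]
          have hsplit : Real.exp (-α' * n) = Real.exp (-α * n) * Real.exp ((α - α') * n) := by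
            rw [← Real.exp_add]
            ring_nf
          calc ((F n).card : ℝ≥0∞) * ENNReal.ofReal (Real.exp (-α' * n))
              = ((F n).card : ℝ≥0∞) * ENNReal.ofReal (Real.exp (-α * n)) *
                ENNReal.ofReal (Real.exp ((α - α') * n)) := by
                rw [hsplit, ENNReal.ofReal_mul (Real.exp_pos _).le, mul_assoc]
            _ ≤ 1 * ENNReal.ofReal (Real.exp ((α - α') * n)) :=
                mul_le_mul_left (hFcard n) _
            _ = r ^ n := by
                rw [one_mul, show (α - α') * (n : ℝ) = (n : ℕ) * (α - α') by push_cast; ring,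
                  Real.exp_nat_mul, ENNReal.ofReal_pow (Real.exp_pos _).le]
        · simp [hN]
    _ = ∑' i : ℕ, (if N ≤ i + N then r ^ (i + N) else 0) := by
        refine (Function.Injective.tsum_eq (g := fun i : ℕ => i + N)
          (add_left_injective N) ?_).symm
        intro nn hnn
        simp only [Function.mem_support] at hnn
        have hNn : N ≤ nn := by by_contra hcon; simp [hcon] at hnn
        exact ⟨nn - N, by simp; omega⟩
    _ = ∑' i : ℕ, r ^ i * r ^ N := by
        refine tsum_congr fun i => ?_
        rw [if_pos (Nat.le_add_left N i), pow_add]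
    _ = (∑' i : ℕ, r ^ i) * r ^ N := ENNReal.tsum_mul_right
    _ = (1 - r)⁻¹ * r ^ N := by rw [ENNReal.tsum_geometric]

lemma Mlim_eq_zero [BorelSpace X] (f : ℕ → X → X) (hf : ∀ n, Continuous (f n))
    (μ : Measure X) [IsProbabilityMeasure μ] (Z : Set X) {ε s α' : ℝ}
    (hε : 0 < ε) (hs : s < α')
    (hloc_le : ∀ x ∈ Z, hloc f μ x ≤ (s : EReal)) :
    Mlim f (fun _ => 0) Z α' ε = 0 := by
  set α := (s + α') / 2 with hα_def
  have hsα : s < α := by rw [hα_def]; linarith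
  have hαα' : α < α' := by rw [hα_def]; linarith
  have hcov : ∀ x ∈ Z, ∀ N : ℕ, ∃ n, N ≤ n ∧
      ENNReal.ofReal (Real.exp (-α * n)) ≤ μ (bowenBall f n x (ε / 2)) := by
    intro x hx N
    have h1 : locSeq f μ x (ε / 2) ≤ (s : EReal) :=
      le_trans (locSeq_le_hloc f μ x (by linarith)) (hloc_le x hx)
    exact exists_large_ball f μ h1 hsα N
  set r := ENNReal.ofReal (Real.exp (α - α')) with hr_def
  have hr : r < 1 := by
    rw [hr_def, ← ENNReal.ofReal_one]
    exact ENNReal.ofReal_lt_ofReal_iff one_pos |>.mpr (Real.exp_lt_one_iff.mpr (by linarith))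
  have htend : Filter.Tendsto (fun N : ℕ => (1 - r)⁻¹ * r ^ N) Filter.atTop (nhds 0) := by
    have h1 := ENNReal.tendsto_pow_atTop_nhds_zero_of_lt_one hr
    have h2 := ENNReal.Tendsto.const_mul h1
      (Or.inr (ENNReal.inv_ne_top.mpr (tsub_pos_of_lt hr).ne'))
    simpa using h2
  refine le_antisymm (iSup_le fun n => ?_) zero_le
  refine ge_of_tendsto htend ?_
  rw [Filter.eventually_atTop]
  refine ⟨n, fun N hN => ?_⟩
  exact le_trans (Mpre_mono_n f _ Z α' ε hN) (Mpre_le_bound f hf μ Z hε hαα' hcov N)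

lemma Wpre_le_Mpre (f : ℕ → X → X) (ψ : X → ℝ) (Z : Set X) (n : ℕ) (α ε : ℝ) :
    Wpre f ψ Z n α ε ≤ Mpre f ψ Z n α ε := by
  apply sInf_le_sInf
  rintro S ⟨u, c, m, h1, h2, h3⟩
  refine ⟨u, c, m, fun _ => (1 : ℝ), fun i _ => one_pos, h1, ?_, ?_⟩
  · intro z hz
    have := h2 hz
    rw [Set.mem_iUnion₂] at this
    obtain ⟨i, hiu, hzi⟩ := this
    calc (1 : ℝ≥0∞)
        = (bowenBall f (m i) (c i) ε).indicator (fun _ => ENNReal.ofReal (1 : ℝ)) z := by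
          rw [Set.indicator_of_mem hzi]; simp
      _ ≤ ∑' i : u, (bowenBall f (m i) (c i) ε).indicator
            (fun _ => ENNReal.ofReal (1 : ℝ)) z := ENNReal.le_tsum (⟨i, hiu⟩ : u)
  · rw [h3]
    exact tsum_congr fun i => by simp

lemma ereal_le_coe_of_forall {x : EReal} {s : ℝ} (h : ∀ α : ℝ, s < α → x ≤ (α : EReal)) :
    x ≤ (s : EReal) := by
  refine le_of_forall_gt_imp_ge_of_dense fun a ha => ?_
  induction a with
  | bot => exact absurd ha (by simp)
  | coe a => exact h a (EReal.coe_lt_coe_iff.mp ha)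
  | top => exact le_top

lemma PBeps_le [BorelSpace X] (f : ℕ → X → X) (hf : ∀ n, Continuous (f n))
    (μ : Measure X) [IsProbabilityMeasure μ] (Z : Set X) {ε s : ℝ} (hε : 0 < ε)
    (hloc_le : ∀ x ∈ Z, hloc f μ x ≤ (s : EReal)) :
    PBeps f (fun _ => 0) Z ε ≤ (s : EReal) := by
  apply ereal_le_coe_of_forall
  intro α' hsa
  exact sInf_le ⟨α', Mlim_eq_zero f hf μ Z hε hsa hloc_le, rfl⟩

lemma PWeps_le [BorelSpace X] (f : ℕ → X → X) (hf : ∀ n, Continuous (f n))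
    (μ : Measure X) [IsProbabilityMeasure μ] (Z : Set X) {ε s : ℝ} (hε : 0 < ε)
    (hloc_le : ∀ x ∈ Z, hloc f μ x ≤ (s : EReal)) :
    PWeps f (fun _ => 0) Z ε ≤ (s : EReal) := by
  apply ereal_le_coe_of_forall
  intro α' hsa
  refine sInf_le ⟨α', ?_, rfl⟩
  have hW : Wlim f (fun _ => 0) Z α' ε ≤ Mlim f (fun _ => 0) Z α' ε :=
    iSup_mono fun n => Wpre_le_Mpre f _ Z n α' ε
  rw [Set.mem_setOf_eq]
  exact le_antisymm (le_trans hW (le_of_eq (Mlim_eq_zero f hf μ Z hε hsa hloc_le))) zero_le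

lemma Mpre_anti_eps (f : ℕ → X → X) (Z : Set X) (n : ℕ) (α : ℝ) {ε₁ ε₂ : ℝ} (h : ε₁ ≤ ε₂) :
    Mpre f (fun _ => 0) Z n α ε₂ ≤ Mpre f (fun _ => 0) Z n α ε₁ := by
  apply sInf_le_sInf
  rintro S ⟨u, c, m, h1, h2, h3⟩
  refine ⟨u, c, m, h1, fun z hz => ?_, ?_⟩
  · have := h2 hz
    rw [Set.mem_iUnion₂] at this
    obtain ⟨i, hi, hzi⟩ := this
    exact Set.mem_biUnion hi (bowenBall_mono f _ _ h hzi)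
  · rw [h3]
    exact tsum_congr fun i => by rw [birkSupBall_zero, birkSupBall_zero]

lemma Wpre_anti_eps (f : ℕ → X → X) (Z : Set X) (n : ℕ) (α : ℝ) {ε₁ ε₂ : ℝ} (h : ε₁ ≤ ε₂) :
    Wpre f (fun _ => 0) Z n α ε₂ ≤ Wpre f (fun _ => 0) Z n α ε₁ := by
  apply sInf_le_sInf
  rintro S ⟨u, cx, m, c, h0, h1, h2, h3⟩
  refine ⟨u, cx, m, c, h0, h1, fun z hz => ?_, ?_⟩
  · refine le_trans (h2 z hz) (ENNReal.tsum_le_tsum fun i => ?_)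
    exact Set.indicator_le_indicator_of_subset (bowenBall_mono f _ _ h) (fun _ => zero_le) z
  · rw [h3]
    exact tsum_congr fun i => by rw [birkSupBall_zero, birkSupBall_zero]

lemma PBeps_anti (f : ℕ → X → X) (Z : Set X) :
    AntitoneOn (fun ε => PBeps f (fun _ => 0) Z ε) (Ioi (0 : ℝ)) := by
  intro ε₁ _ ε₂ _ h
  apply sInf_le_sInf
  apply Set.image_mono
  intro α hα
  rw [Set.mem_setOf_eq] at hα ⊢
  refine le_antisymm ?_ zero_le
  rw [← hα]
  exact iSup_mono fun n => Mpre_anti_eps f Z n α h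

lemma PWeps_anti (f : ℕ → X → X) (Z : Set X) :
    AntitoneOn (fun ε => PWeps f (fun _ => 0) Z ε) (Ioi (0 : ℝ)) := by
  intro ε₁ _ ε₂ _ h
  apply sInf_le_sInf
  apply Set.image_mono
  intro α hα
  rw [Set.mem_setOf_eq] at hα ⊢
  refine le_antisymm ?_ zero_le
  rw [← hα]
  exact iSup_mono fun n => Wpre_anti_eps f Z n α h

lemma limUnder_le_coe {F : ℝ → EReal} {s : ℝ} (hA : AntitoneOn F (Set.Ioi 0))
    (hb : ∀ ε : ℝ, 0 < ε → F ε ≤ (s : EReal)) :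
    limUnder (nhdsWithin 0 (Set.Ioi 0)) F ≤ (s : EReal) := by
  have hbdd : BddAbove (F '' Set.Ioi 0) := ⟨(s : EReal), by rintro _ ⟨ε, hε, rfl⟩; exact hb ε hε⟩
  have ht := hA.tendsto_nhdsGT hbdd
  rw [ht.limUnder_eq]
  exact sSup_le (by rintro _ ⟨ε, hε, rfl⟩; exact hb ε hε)

end Aux

/-- If the local lower entropy satisfies `h̲_μ(f_{1,∞},x) ≤ s` for all `x ∈ Z`,
then the Bowen and weighted Bowen topological entropies of `Z` are at most `s`. -/
theorem statement2 [CompactSpace X] [BorelSpace X]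
    (f : ℕ → X → X) (hf : ∀ n, Continuous (f n))
    (μ : Measure X) [IsProbabilityMeasure μ] (Z : Set X) (s : ℝ)
    (h : ∀ x ∈ Z, hloc f μ x ≤ (s : EReal)) :
    hBtop f Z ≤ (s : EReal) ∧ hWBtop f Z ≤ (s : EReal) := by
  constructor
  · exact limUnder_le_coe (PBeps_anti f Z) fun ε hε => PBeps_le f hf μ Z hε h
  · exact limUnder_le_coe (PWeps_anti f Z) fun ε hε => PWeps_le f hf μ Z hε h

end
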